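/- arXiv:2304.09963 — 4 statements merged into one kernel-verified Lean document; each statement's English description precedes it below -/
import Mathlib

section
/- Let k be a field, N ≥ 1 and r ≥ 0 integers. If Γ is a nonempty finite set of points of ℙ^N over k satisfying the Cayley–Bacharach condition CB(r), then |Γ| ≥ r + 2. -/
open MvPolynomial

/-- Linear polynomial from a dual functional. -/
noncomputable def linPoly {k : Type} [Field k] {N : ℕ}
    (φ : Module.Dual k (Fin (N + 1) → k)) : MvPolynomial (Fin (N + 1)) k :=
  ∑ i, C (φ fun j => if i = j then 1 else 0) * X i

lemma linPoly_eval {k : Type} [Field k] {N : ℕ}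
    (φ : Module.Dual k (Fin (N + 1) → k)) (v : Fin (N + 1) → k) :
    MvPolynomial.eval v (linPoly φ) = φ v := by
  rw [LinearMap.pi_apply_eq_sum_univ φ v, linPoly]
  simp [mul_comm, smul_eq_mul]

lemma linPoly_hom {k : Type} [Field k] {N : ℕ}
    (φ : Module.Dual k (Fin (N + 1) → k)) : (linPoly φ).IsHomogeneous 1 := by
  apply MvPolynomial.IsHomogeneous.sum
  intro i _
  exact MvPolynomial.isHomogeneous_C_mul_X _ _



/-- A homogeneous polynomial `f` vanishes at a point `P` of projective space `ℙ^N` over `k`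
(a one-dimensional subspace of `k^{N+1}`) if it vanishes at a (equivalently, for homogeneous
`f`, any) nonzero representative vector of `P`. -/
def VanishesAt {k : Type} [Field k] {N : ℕ}
    (f : MvPolynomial (Fin (N + 1)) k) (P : Projectivization k (Fin (N + 1) → k)) : Prop :=
  MvPolynomial.eval P.rep f = 0

/-- A finite set `Γ ⊆ ℙ^N` satisfies the Cayley–Bacharach condition `CB(r)` if for every
`P ∈ Γ`, every homogeneous polynomial of degree `r` vanishing at all points of `Γ \ {P}`
also vanishes at `P`. -/
def CayleyBacharach {k : Type} [Field k] (N : ℕ) (r : ℕ)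
    (Γ : Finset (Projectivization k (Fin (N + 1) → k))) : Prop :=
  ∀ P ∈ Γ, ∀ f : MvPolynomial (Fin (N + 1)) k, f.IsHomogeneous r →
    (∀ Q ∈ Γ, Q ≠ P → VanishesAt f Q) → VanishesAt f P

/-- A nonempty finite set of points of `ℙ^N` satisfying `CB(r)` has at least `r + 2` points. -/
theorem stmt0 (k : Type) [Field k] (N r : ℕ) (hN : 1 ≤ N)
    (Γ : Finset (Projectivization k (Fin (N + 1) → k))) (hne : Γ.Nonempty)
    (hCB : CayleyBacharach N r Γ) :
    r + 2 ≤ Γ.card := by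
  by_contra hlt
  push_neg at hlt
  obtain ⟨P, hP⟩ := hne
  classical
  set S := Γ.erase P with hS
  have hScard : S.card ≤ r := by
    have : S.card = Γ.card - 1 := Finset.card_erase_of_mem hP
    omega
  -- for each Q in S, get a functional vanishing at Q.rep but not at P.rep
  have hfun : ∀ Q ∈ S, ∃ φ : Module.Dual k (Fin (N + 1) → k),
      φ P.rep ≠ 0 ∧ φ Q.rep = 0 := by
    intro Q hQ
    have hQP : Q ≠ P := Finset.ne_of_mem_erase hQ
    have hnm : P.rep ∉ Submodule.span k {Q.rep} := by
      intro hmem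
      rw [Submodule.mem_span_singleton] at hmem
      obtain ⟨a, ha⟩ := hmem
      apply hQP
      have : Projectivization.mk k Q.rep Q.rep_nonzero
          = Projectivization.mk k P.rep P.rep_nonzero := by
        rw [Projectivization.mk_eq_mk_iff']
        exact ⟨a⁻¹, by
          rcases eq_or_ne a 0 with h | h
          · exfalso; exact P.rep_nonzero (by rw [← ha, h, zero_smul])
          · rw [← ha, smul_smul, inv_mul_cancel₀ h, one_smul]⟩
      simpa [Projectivization.mk_rep] using this
    obtain ⟨φ, hφ1, hφ2⟩ :=
      (Submodule.span k {Q.rep}).exists_dual_map_eq_bot_of_notMem hnm inferInstance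
    refine ⟨φ, hφ1, ?_⟩
    have : φ Q.rep ∈ (Submodule.span k {Q.rep}).map φ :=
      Submodule.mem_map_of_mem (Submodule.mem_span_singleton_self _)
    rw [hφ2] at this
    exact (Submodule.mem_bot _).mp this
  choose φ hφP hφQ using hfun
  -- coordinate where P.rep is nonzero
  obtain ⟨i0, hi0⟩ : ∃ i, P.rep i ≠ 0 := by
    by_contra h
    push_neg at h
    exact P.rep_nonzero (funext h)
  -- the polynomial
  set f : MvPolynomial (Fin (N + 1)) k :=
    (∏ Q ∈ S.attach, linPoly (φ Q.1 Q.2)) * (X i0) ^ (r - S.card) with hf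
  have hhom : f.IsHomogeneous r := by
    have h1 : (∏ Q ∈ S.attach, linPoly (φ Q.1 Q.2)).IsHomogeneous S.card := by
      have := MvPolynomial.IsHomogeneous.prod S.attach
        (fun Q => linPoly (φ Q.1 Q.2)) (fun _ => 1)
        (fun Q _ => linPoly_hom (φ Q.1 Q.2))
      simpa [Finset.card_attach] using this
    have h2 : ((X i0 : MvPolynomial (Fin (N + 1)) k) ^ (r - S.card)).IsHomogeneous
        (r - S.card) := MvPolynomial.isHomogeneous_X_pow _ _
    have := h1.mul h2
    rwa [Nat.add_sub_cancel' hScard] at this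
  have hvan : ∀ Q ∈ Γ, Q ≠ P → VanishesAt f Q := by
    intro Q hQ hQP
    have hQS : Q ∈ S := Finset.mem_erase.mpr ⟨hQP, hQ⟩
    unfold VanishesAt
    rw [hf, map_mul, map_prod]
    have : MvPolynomial.eval Q.rep (linPoly (φ Q hQS)) = 0 := by
      rw [linPoly_eval]; exact hφQ Q hQS
    rw [Finset.prod_eq_zero (Finset.mem_attach S ⟨Q, hQS⟩) this, zero_mul]
  have := hCB P hP f hhom hvan
  unfold VanishesAt at this
  rw [hf, map_mul, map_prod, map_pow] at this
  have hne1 : ∀ Q ∈ S.attach, MvPolynomial.eval P.rep (linPoly (φ Q.1 Q.2)) ≠ 0 := by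
    intro Q _
    rw [linPoly_eval]; exact hφP Q.1 Q.2
  have hne2 : (MvPolynomial.eval P.rep (X i0 : MvPolynomial (Fin (N + 1)) k))
      ^ (r - S.card) ≠ 0 := by
    simpa using pow_ne_zero _ hi0
  exact (mul_ne_zero (Finset.prod_ne_zero_iff.mpr hne1) hne2) this
end

section
/- Let k be a field, N ≥ 1, and let Γ be a finite set of points of ℙ^N over k satisfying the Cayley–Bacharach condition CB(r). Let g ∈ k[x_0,…,x_N] be a homogeneous polynomial of degree d with 0 ≤ d ≤ r, and let D ⊆ ℙ^N be the set of points at which g vanishes. Then the set Γ \ (Γ ∩ D) satisfies the Cayley–Bacharach condition CB(r − d). -/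
/-- If `Γ ⊆ ℙ^N` satisfies `CB(r)`, `g` is homogeneous of degree `d ≤ r` with vanishing
locus `D`, then `Γ \ (Γ ∩ D)` (the points of `Γ` where `g` does not vanish) satisfies
`CB(r - d)`. -/
theorem stmt1 (k : Type) [Field k] (N r d : ℕ) (hN : 1 ≤ N) (hdr : d ≤ r)
    (Γ : Finset (Projectivization k (Fin (N + 1) → k)))
    (hCB : CayleyBacharach N r Γ)
    (g : MvPolynomial (Fin (N + 1)) k) (hg : g.IsHomogeneous d)
    (Γ' : Finset (Projectivization k (Fin (N + 1) → k)))
    (hΓ' : ∀ P, P ∈ Γ' ↔ P ∈ Γ ∧ ¬ VanishesAt g P) :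
    CayleyBacharach N (r - d) Γ' := by
  intro P hP f hf hvan
  obtain ⟨hPΓ, hPg⟩ := (hΓ' P).mp hP
  have hfg : (f * g).IsHomogeneous r := by
    have := hf.mul hg
    rwa [Nat.sub_add_cancel hdr] at this
  have hvan' : ∀ Q ∈ Γ, Q ≠ P → VanishesAt (f * g) Q := by
    intro Q hQ hQP
    unfold VanishesAt at *
    rw [map_mul]
    by_cases hQg : VanishesAt g Q
    · rw [hQg, mul_zero]
    · have hQ' : Q ∈ Γ' := (hΓ' Q).mpr ⟨hQ, hQg⟩
      rw [hvan Q hQ' hQP, zero_mul]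
  have := hCB P hPΓ (f * g) hfg hvan'
  unfold VanishesAt at *
  rw [map_mul] at this
  exact (mul_eq_zero.mp this).resolve_right hPg
end

section
/- Let k be a field, N ≥ 1, and let Γ be a finite set of points of ℙ^N over k satisfying the Cayley–Bacharach condition CB(r). Let Γ' ⊆ Γ be a subset, and suppose there exists a homogeneous polynomial g ∈ k[x_0,…,x_N] of degree m with 0 ≤ m ≤ r such that g vanishes at every point of Γ \ Γ' and g vanishes at no point of Γ'. Then Γ' satisfies the Cayley–Bacharach condition CB(r − m); in particular, if Γ' is nonempty then |Γ'| ≥ r − m + 2. -/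
open MvPolynomial

lemma exists_sep {k : Type} [Field k] {N : ℕ}
    (P Q : Projectivization k (Fin (N + 1) → k)) (h : Q ≠ P) :
    ∃ f : MvPolynomial (Fin (N + 1)) k, f.IsHomogeneous 1 ∧
      MvPolynomial.eval Q.rep f = 0 ∧ MvPolynomial.eval P.rep f ≠ 0 := by
  set p := P.rep with hp
  set q := Q.rep with hq
  have hq0 : q ≠ 0 := Q.rep_nonzero
  have hp0 : p ≠ 0 := P.rep_nonzero
  obtain ⟨j, hj⟩ : ∃ j, q j ≠ 0 := by
    by_contra hc
    push_neg at hc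
    exact hq0 (funext hc)
  obtain ⟨i, hi⟩ : ∃ i, p i * q j - p j * q i ≠ 0 := by
    by_contra hc
    push_neg at hc
    apply h
    have hpq : p = (p j / q j) • q := by
      funext i
      have h2 : p i * q j - p j * q i = 0 := hc i
      show p i = (p j / q j) * q i
      field_simp
      linear_combination h2
    have hc0 : p j / q j ≠ 0 := by
      intro h0
      rw [h0, zero_smul] at hpq
      exact hp0 hpq
    have : Projectivization.mk k q hq0 = Projectivization.mk k p hp0 := by
      rw [Projectivization.mk_eq_mk_iff']
      obtain ⟨c, hc0', hpq'⟩ : ∃ c : k, c ≠ 0 ∧ p = c • q := ⟨_, hc0, hpq⟩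
      refine ⟨c⁻¹, ?_⟩
      rw [hpq', smul_smul, inv_mul_cancel₀ hc0', one_smul]
    calc Q = Projectivization.mk k q hq0 := (Projectivization.mk_rep Q).symm
    _ = Projectivization.mk k p hp0 := this
    _ = P := Projectivization.mk_rep P
  have ev : ∀ v : Fin (N + 1) → k,
      MvPolynomial.eval v (C (q j) * X i - C (q i) * X j) = q j * v i - q i * v j := by
    intro v; simp
  refine ⟨C (q j) * X i - C (q i) * X j, ?_, ?_, ?_⟩
  · exact (isHomogeneous_C_mul_X _ _).sub (isHomogeneous_C_mul_X _ _)
  · rw [ev]; ring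
  · rw [ev]; intro h2; exact hi (by linear_combination h2)

/-- If `Γ ⊆ ℙ^N` satisfies `CB(r)`, `Γ' ⊆ Γ`, and there is a homogeneous polynomial `g` of
degree `m ≤ r` vanishing at every point of `Γ \ Γ'` and at no point of `Γ'`, then `Γ'`
satisfies `CB(r - m)`; in particular, if `Γ'` is nonempty then `|Γ'| ≥ r - m + 2`. -/
theorem stmt2 (k : Type) [Field k] (N r m : ℕ) (hN : 1 ≤ N) (hmr : m ≤ r)
    (Γ Γ' : Finset (Projectivization k (Fin (N + 1) → k)))
    (hsub : Γ' ⊆ Γ)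
    (hCB : CayleyBacharach N r Γ)
    (g : MvPolynomial (Fin (N + 1)) k) (hg : g.IsHomogeneous m)
    (hvan : ∀ P ∈ Γ, P ∉ Γ' → VanishesAt g P)
    (hnonvan : ∀ P ∈ Γ', ¬ VanishesAt g P) :
    CayleyBacharach N (r - m) Γ' ∧ (Γ'.Nonempty → r - m + 2 ≤ Γ'.card) := by
  classical
  have hCB' : CayleyBacharach N (r - m) Γ' := by
    intro P hP f hf hvanf
    have hfg : (f * g).IsHomogeneous r := by
      have := hf.mul hg
      rwa [Nat.sub_add_cancel hmr] at this
    have hmain : VanishesAt (f * g) P := by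
      refine hCB P (hsub hP) (f * g) hfg ?_
      intro Q hQ hQP
      by_cases hQ' : Q ∈ Γ'
      · show MvPolynomial.eval Q.rep (f * g) = 0
        rw [map_mul, hvanf Q hQ' hQP, zero_mul]
      · show MvPolynomial.eval Q.rep (f * g) = 0
        rw [map_mul, hvan Q hQ hQ', mul_zero]
    have hgP := hnonvan P hP
    unfold VanishesAt at hmain hgP ⊢
    rw [map_mul] at hmain
    rcases mul_eq_zero.mp hmain with h | h
    · exact h
    · exact absurd h hgP
  refine ⟨hCB', ?_⟩
  intro hne
  by_contra hcard
  push_neg at hcard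
  obtain ⟨P, hP⟩ := hne
  have ht : (Γ'.erase P).card ≤ r - m := by
    rw [Finset.card_erase_of_mem hP]
    omega
  obtain ⟨i0, hi0⟩ : ∃ i0, P.rep i0 ≠ 0 := by
    by_contra hc
    push_neg at hc
    exact P.rep_nonzero (funext hc)
  choose F hF1 hF2 hF3 using
    fun (Q : {x // x ∈ Γ'.erase P}) => exists_sep P Q (Finset.ne_of_mem_erase Q.2)
  set f : MvPolynomial (Fin (N + 1)) k :=
    (∏ Q ∈ (Γ'.erase P).attach, F Q) *
      (MvPolynomial.X i0) ^ (r - m - (Γ'.erase P).card) with hfdef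
  have hfhom : f.IsHomogeneous (r - m) := by
    have h1 := MvPolynomial.IsHomogeneous.prod (Γ'.erase P).attach F (fun _ => 1)
      (fun Q _ => hF1 Q)
    rw [Finset.sum_const, Finset.card_attach, smul_eq_mul, mul_one] at h1
    have h2 := MvPolynomial.isHomogeneous_X_pow (R := k) i0 (r - m - (Γ'.erase P).card)
    have hf := h1.mul h2
    rwa [Nat.add_sub_cancel' ht] at hf
  have hzero : VanishesAt f P := by
    refine hCB' P hP f hfhom ?_
    intro Q hQ hQP
    show MvPolynomial.eval Q.rep f = 0
    rw [hfdef, map_mul, map_prod]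
    rw [Finset.prod_eq_zero (Finset.mem_attach _ ⟨Q, Finset.mem_erase.mpr ⟨hQP, hQ⟩⟩)
      (hF2 ⟨Q, Finset.mem_erase.mpr ⟨hQP, hQ⟩⟩), zero_mul]
  unfold VanishesAt at hzero
  rw [hfdef, map_mul, map_prod, map_pow, MvPolynomial.eval_X] at hzero
  exact mul_ne_zero (Finset.prod_ne_zero_iff.mpr fun R _ => hF3 R)
    (pow_ne_zero _ hi0) hzero
end

section
/- Let n ≥ 1 and let S be a nonempty set of nonzero vectors of ℤⁿ, regarded as vectors in ℝⁿ. Let D denote the topological interior of the dual cone {β ∈ ℝⁿ : ⟨β, s⟩ ≥ 0 for all s ∈ S}, where ⟨·,·⟩ is the standard inner product. Then for every α ∈ D the infimum m(α) := inf_{s ∈ S} ⟨α, s⟩ is attained by some s ∈ S, and the resulting function m : D → ℝ is continuous. -/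
private lemma stmt8_pair_lip (n : ℕ) (α β : Fin n → ℝ) (s : Fin n → ℤ) :
    ∑ i, α i * (s i : ℝ) ≤ (∑ i, β i * (s i : ℝ)) + dist α β * ∑ i, |(s i : ℝ)| := by
  rw [Finset.mul_sum, ← Finset.sum_add_distrib]
  refine Finset.sum_le_sum fun i _ => ?_
  have h1 : |α i - β i| ≤ dist α β := by
    rw [← Real.dist_eq]; exact dist_le_pi_dist α β i
  have h2 : (α i - β i) * (s i : ℝ) ≤ dist α β * |(s i : ℝ)| := by
    calc (α i - β i) * (s i : ℝ) ≤ |(α i - β i) * (s i : ℝ)| := le_abs_self _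
      _ = |α i - β i| * |(s i : ℝ)| := abs_mul _ _
      _ ≤ dist α β * |(s i : ℝ)| := mul_le_mul_of_nonneg_right h1 (abs_nonneg _)
  linarith

private lemma stmt8_key (n : ℕ) (S : Set (Fin n → ℤ)) (α : Fin n → ℝ) (r : ℝ) (hr : 0 < r)
    (hball : Metric.ball α r ⊆ {β : Fin n → ℝ | ∀ s ∈ S, 0 ≤ ∑ i, β i * (s i : ℝ)}) :
    ∀ s ∈ S, (r / 2) * ∑ i, |(s i : ℝ)| ≤ ∑ i, α i * (s i : ℝ) := by
  intro s hs
  set u : Fin n → ℝ := fun i => if (s i : ℝ) < 0 then -1 else 1 with hu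
  have hnu : ‖u‖ ≤ 1 := by
    refine pi_norm_le_iff_of_nonneg zero_le_one |>.2 fun i => ?_
    rw [hu]
    by_cases h : (s i : ℝ) < 0 <;> simp [h]
  have hmem : α - (r/2) • u ∈ Metric.ball α r := by
    rw [Metric.mem_ball, dist_eq_norm, sub_sub_cancel_left, norm_neg, norm_smul]
    have : ‖(r/2 : ℝ)‖ = r/2 := by rw [Real.norm_eq_abs, abs_of_pos (by linarith)]
    rw [this]
    nlinarith [norm_nonneg u]
  have h0 := hball hmem s hs
  have hcalc : ∑ i, (α - (r/2) • u) i * (s i : ℝ)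
      = (∑ i, α i * (s i : ℝ)) - (r/2) * ∑ i, |(s i : ℝ)| := by
    rw [Finset.mul_sum, ← Finset.sum_sub_distrib]
    refine Finset.sum_congr rfl fun i _ => ?_
    simp only [Pi.sub_apply, Pi.smul_apply, smul_eq_mul, hu]
    by_cases h : (s i : ℝ) < 0
    · rw [abs_of_neg h]; simp [h]; ring
    · rw [abs_of_nonneg (not_lt.1 h)]; simp [h]; ring
  rw [hcalc] at h0
  linarith

private lemma stmt8_finite (n : ℕ) (B : ℝ) :
    {s : Fin n → ℤ | (∑ i, |(s i : ℝ)|) ≤ B}.Finite := by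
  refine Set.Finite.subset (Set.Finite.pi (fun _ : Fin n => Set.finite_Icc (-⌈B⌉) ⌈B⌉)) ?_
  intro s hs
  rw [Set.mem_pi]
  intro i _
  have h1 : |(s i : ℝ)| ≤ B :=
    le_trans (Finset.single_le_sum (f := fun j => |(s j : ℝ)|) (fun j _ => abs_nonneg _) (Finset.mem_univ i)) hs
  have h2 : |(s i : ℝ)| ≤ (⌈B⌉ : ℝ) := h1.trans (Int.le_ceil B)
  have h3 : |s i| ≤ ⌈B⌉ := by exact_mod_cast (by push_cast; exact h2 : ((|s i| : ℤ) : ℝ) ≤ (⌈B⌉ : ℝ))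
  exact Set.mem_Icc.2 (abs_le.1 h3)

private lemma stmt8_attain (n : ℕ) (S : Set (Fin n → ℤ)) (hS : S.Nonempty) (α : Fin n → ℝ)
    (ε : ℝ) (hε : 0 < ε) (h : ∀ s ∈ S, ε * ∑ i, |(s i : ℝ)| ≤ ∑ i, α i * (s i : ℝ)) :
    ∃ s₀ ∈ S, ∀ s ∈ S, ∑ i, α i * (s₀ i : ℝ) ≤ ∑ i, α i * (s i : ℝ) := by
  obtain ⟨s₁, hs₁⟩ := hS
  set T := S ∩ {s | (∑ i, |(s i : ℝ)|) ≤ (∑ i, α i * (s₁ i : ℝ)) / ε} with hT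
  have hTfin : T.Finite := (stmt8_finite n _).subset Set.inter_subset_right
  have hs₁T : s₁ ∈ T := by
    refine ⟨hs₁, ?_⟩
    rw [Set.mem_setOf_eq, le_div_iff₀ hε, mul_comm]
    exact h s₁ hs₁
  obtain ⟨s₀, hs₀T, hmin⟩ := Set.exists_min_image T (fun s => ∑ i, α i * (s i : ℝ)) hTfin ⟨s₁, hs₁T⟩
  refine ⟨s₀, hs₀T.1, fun s hs => ?_⟩
  by_cases hsT : s ∈ T
  · exact hmin s hsT
  · have hN : ¬ (∑ i, |(s i : ℝ)|) ≤ (∑ i, α i * (s₁ i : ℝ)) / ε := fun hc => hsT ⟨hs, hc⟩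
    push_neg at hN
    have h1 : (∑ i, α i * (s₁ i : ℝ)) < ε * ∑ i, |(s i : ℝ)| := by
      rw [div_lt_iff₀ hε] at hN; linarith [hN]
    have := h s hs
    have := hmin s₁ hs₁T
    linarith

/-- Let `S` be a nonempty set of nonzero integer vectors in `ℤⁿ`, viewed inside `ℝⁿ`, and
let `D` be the interior of the dual cone `{β : ⟨β, s⟩ ≥ 0 for all s ∈ S}` for the standard
inner product. Then for each `α ∈ D` the infimum of `⟨α, s⟩` over `s ∈ S` is attained, and
the resulting minimum function is continuous on `D`. -/
theorem stmt8 (n : ℕ) (hn : 1 ≤ n) (S : Set (Fin n → ℤ)) (hS : S.Nonempty)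
    (hS0 : ∀ s ∈ S, s ≠ 0) :
    ∃ m : (Fin n → ℝ) → ℝ,
      (∀ α ∈ interior {β : Fin n → ℝ | ∀ s ∈ S, 0 ≤ ∑ i, β i * (s i : ℝ)},
        IsLeast {x : ℝ | ∃ s ∈ S, x = ∑ i, α i * (s i : ℝ)} (m α)) ∧
      ContinuousOn m (interior {β : Fin n → ℝ | ∀ s ∈ S, 0 ≤ ∑ i, β i * (s i : ℝ)}) := by
  classical
  set C := {β : Fin n → ℝ | ∀ s ∈ S, 0 ≤ ∑ i, β i * (s i : ℝ)} with hC
  set m : (Fin n → ℝ) → ℝ := fun α => sInf {x : ℝ | ∃ s ∈ S, x = ∑ i, α i * (s i : ℝ)}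
    with hm
  have hleast : ∀ α ∈ interior C,
      IsLeast {x : ℝ | ∃ s ∈ S, x = ∑ i, α i * (s i : ℝ)} (m α) := by
    intro α hα
    obtain ⟨r, hr, hball⟩ := Metric.isOpen_iff.mp isOpen_interior α hα
    have hball' : Metric.ball α r ⊆ C := hball.trans interior_subset
    have hkey := stmt8_key n S α r hr hball'
    obtain ⟨s₀, hs₀, hmin⟩ := stmt8_attain n S hS α (r/2) (half_pos hr) hkey
    have hIs : IsLeast {x : ℝ | ∃ s ∈ S, x = ∑ i, α i * (s i : ℝ)}
        (∑ i, α i * (s₀ i : ℝ)) := by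
      refine ⟨⟨s₀, hs₀, rfl⟩, ?_⟩
      rintro x ⟨s, hs, rfl⟩
      exact hmin s hs
    have heq : m α = ∑ i, α i * (s₀ i : ℝ) := hIs.csInf_eq
    rw [heq]
    exact hIs
  refine ⟨m, hleast, ?_⟩
  intro α₀ hα₀
  obtain ⟨r, hr, hballD⟩ := Metric.isOpen_iff.mp isOpen_interior α₀ hα₀
  have hsub : Metric.ball α₀ (r/2) ⊆ interior C := by
    intro β hβ
    exact hballD (Metric.mem_ball.2 (lt_of_lt_of_le (Metric.mem_ball.1 hβ) (by linarith)))
  have hkey2 : ∀ α ∈ Metric.ball α₀ (r/2), ∀ s ∈ S,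
      (r/4) * ∑ i, |(s i : ℝ)| ≤ ∑ i, α i * (s i : ℝ) := by
    intro α hα s hs
    have hb : Metric.ball α (r/2) ⊆ C := by
      intro β hβ
      refine interior_subset (hballD (Metric.mem_ball.2 ?_))
      have h1 := Metric.mem_ball.1 hβ
      have h2 := Metric.mem_ball.1 hα
      calc dist β α₀ ≤ dist β α + dist α α₀ := dist_triangle _ _ _
        _ < r := by linarith
    have h := stmt8_key n S α (r/2) (half_pos hr) hb s hs
    have he : r/2/2 = r/4 := by ring
    rwa [he] at h
  have hr4 : (0:ℝ) < r/4 := by linarith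
  have hm0 : ∀ α ∈ Metric.ball α₀ (r/2), 0 ≤ m α := by
    intro α hα
    obtain ⟨s, hs, hms⟩ := (hleast α (hsub hα)).1
    have h1 := hkey2 α hα s hs
    have h2 : (0:ℝ) ≤ ∑ i, |(s i : ℝ)| := Finset.sum_nonneg fun i _ => abs_nonneg _
    rw [hms]
    nlinarith
  have hlip : ∀ α ∈ Metric.ball α₀ (r/2), ∀ β ∈ Metric.ball α₀ (r/2),
      m β ≤ m α + dist β α * (m α / (r/4)) := by
    intro α hα β hβ
    obtain ⟨s, hs, hms⟩ := (hleast α (hsub hα)).1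
    have h1 : m β ≤ ∑ i, β i * (s i : ℝ) := (hleast β (hsub hβ)).2 ⟨s, hs, rfl⟩
    have h2 := stmt8_pair_lip n β α s
    have h3 := hkey2 α hα s hs
    have h4 : ∑ i, |(s i : ℝ)| ≤ (∑ i, α i * (s i : ℝ)) / (r/4) :=
      (le_div_iff₀ hr4).2 (by linarith)
    have h5 : dist β α * ∑ i, |(s i : ℝ)| ≤ dist β α * ((∑ i, α i * (s i : ℝ)) / (r/4)) :=
      mul_le_mul_of_nonneg_left h4 dist_nonneg
    rw [hms]
    linarith
  rw [Metric.continuousWithinAt_iff]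
  intro η hη
  have hα₀b : α₀ ∈ Metric.ball α₀ (r/2) := Metric.mem_ball_self (by linarith)
  have hM0 : 0 ≤ m α₀ := hm0 α₀ hα₀b
  obtain ⟨K, hK⟩ : ∃ K : ℝ, K = m α₀ / (r/4) := ⟨_, rfl⟩
  have hK0 : 0 ≤ K := hK ▸ div_nonneg hM0 (le_of_lt hr4)
  obtain ⟨M', hM'⟩ : ∃ M' : ℝ, M' = m α₀ + (r/2) * K := ⟨_, rfl⟩
  have hM'0 : 0 ≤ M' := by rw [hM']; positivity
  obtain ⟨K', hK'⟩ : ∃ K' : ℝ, K' = max K (M' / (r/4)) + 1 := ⟨_, rfl⟩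
  have hK'1 : 1 ≤ K' := by
    have : (0:ℝ) ≤ max K (M' / (r/4)) := le_max_of_le_left hK0
    linarith
  have hK'0 : 0 < K' := by linarith
  refine ⟨min (r/2) (η / K'), lt_min (by linarith) (by positivity), ?_⟩
  intro β hβ hd
  have hβb : β ∈ Metric.ball α₀ (r/2) :=
    Metric.mem_ball.2 (lt_of_lt_of_le hd (min_le_left _ _))
  have hdK' : dist β α₀ * K' < η := by
    have h1 : dist β α₀ < η / K' := lt_of_lt_of_le hd (min_le_right _ _)
    calc dist β α₀ * K' < (η / K') * K' := mul_lt_mul_of_pos_right h1 hK'0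
      _ = η := div_mul_cancel₀ η (ne_of_gt hK'0)
  have hup : m β ≤ m α₀ + dist β α₀ * K := by rw [hK]; exact hlip α₀ hα₀b β hβb
  have hβM' : m β ≤ M' := by
    have h1 : dist β α₀ * K ≤ (r/2) * K := by
      have := Metric.mem_ball.1 hβb
      nlinarith
    linarith
  have hlow : m α₀ ≤ m β + dist α₀ β * (m β / (r/4)) := hlip β hβb α₀ hα₀b
  have h6 : m β / (r/4) ≤ M' / (r/4) := div_le_div_of_nonneg_right hβM' hr4.le  -- check name
  have h7 : dist α₀ β * (m β / (r/4)) ≤ dist β α₀ * (M' / (r/4)) := by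
    rw [dist_comm α₀ β]
    exact mul_le_mul_of_nonneg_left h6 dist_nonneg
  have h8 : dist β α₀ * K ≤ dist β α₀ * K' := by
    have : K ≤ K' := by rw [hK']; have := le_max_left K (M' / (r/4)); linarith
    exact mul_le_mul_of_nonneg_left this dist_nonneg
  have h9 : dist β α₀ * (M' / (r/4)) ≤ dist β α₀ * K' := by
    have : M' / (r/4) ≤ K' := by rw [hK']; have := le_max_right K (M' / (r/4)); linarith
    exact mul_le_mul_of_nonneg_left this dist_nonneg
  rw [Real.dist_eq, abs_lt]
  constructor <;> linarith
end
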